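/- There exists h_c ∈ (1/2,3/4) such that for all h ∈ (1/2,h_c) one has Σ_{k=1}^∞ ρ_h(k)² < 1/4, and for all h ∈ (h_c,3/4) one has Σ_{k=1}^∞ ρ_h(k)² > 1/4. -/

import Mathlib

open MeasureTheory Filter Set ProbabilityTheory

noncomputable section

/-- The normalizing constant `c_H`. -/
def cH (H : ℝ) : ℝ :=
  Real.sqrt (2 * H * Real.Gamma (3 / 2 - H) / (Real.Gamma (H + 1 / 2) * Real.Gamma (2 - 2 * H)))

/-- The constant `C_H = c_H (H - 1/2)`. -/
def CH (H : ℝ) : ℝ := cH H * (H - 1 / 2)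

/-- The kernel `k_H(t,s)`. -/
def kerH (H t s : ℝ) : ℝ :=
  CH H * s ^ (1 / 2 - H) * ∫ u in s..t, u ^ (H - 1 / 2) * (u - s) ^ (H - 3 / 2)

/-- The coefficient `J_n^{(N,H)}(i)` (with volatility `σ`). -/
def JN (σ H : ℝ) (N n i : ℕ) : ℝ :=
  σ * Real.sqrt N * ∫ u in (((i : ℝ) - 1) / N)..((i : ℝ) / N),
    (kerH H ((n : ℝ) / N) u - kerH H (((n : ℝ) - 1) / N) u)

/-- The coefficient `g_n^{(N,H)}` (with volatility `σ`). -/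
def gNH (σ H : ℝ) (N n : ℕ) : ℝ :=
  σ * Real.sqrt N * ∫ u in (((n : ℝ) - 1) / N)..((n : ℝ) / N), kerH H ((n : ℝ) / N) u

/-- The rescaled coefficient `j_n^H(i)`. -/
def jH (σ H : ℝ) (n i : ℕ) : ℝ :=
  σ * CH H * ∫ x in ((i : ℝ) - 1)..(i : ℝ),
    x ^ (1 / 2 - H) *
      ∫ v in (0 : ℝ)..1, (v + n - 1) ^ (H - 1 / 2) * (v + n - 1 - x) ^ (H - 3 / 2)

/-- The rescaled coefficient `g_n^H`. -/
def gnH (σ H : ℝ) (n : ℕ) : ℝ :=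
  σ * CH H * ∫ x in ((n : ℝ) - 1)..(n : ℝ),
    x ^ (1 / 2 - H) * ((n : ℝ) - x) ^ (H - 1 / 2) *
      ∫ y in (0 : ℝ)..1, (y * ((n : ℝ) - x) + x) ^ (H - 1 / 2) * y ^ (H - 3 / 2)

/-- The constant `g_H = σ c_H / (H + 1/2)`. -/
def gH (σ H : ℝ) : ℝ := σ * cH H / (H + 1 / 2)

/-- The autocovariance `ρ_h(k)` of fBm with Hurst parameter `h`. -/
def rho (h : ℝ) (k : ℕ) : ℝ :=
  (((k : ℝ) + 1) ^ (2 * h) + ((k : ℝ) - 1) ^ (2 * h) - 2 * (k : ℝ) ^ (2 * h)) / 2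

/-- The function `φ_n^H(x) = (n-x)^{H-1/2} - (n-1-x)^{H-1/2}`. -/
def phiH (H : ℝ) (n : ℕ) (x : ℝ) : ℝ :=
  ((n : ℝ) - x) ^ (H - 1 / 2) - ((n : ℝ) - 1 - x) ^ (H - 1 / 2)

/-- The quantity `I_n(i)`. -/
def InH (H : ℝ) (n i : ℕ) : ℝ :=
  ∫ x in ((i : ℝ) - 1)..(i : ℝ), x ^ (1 / 2 - H) * phiH H n x

/-- The function `g_n(x) = x^{1/2-H} φ_n^H(x)`. -/
def gmap (H : ℝ) (n : ℕ) (x : ℝ) : ℝ := x ^ (1 / 2 - H) * phiH H n x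

/-- A point of the binary tree (encoded by the booleans `x 0, …, x (n-2)`, where `true ↦ 1` and
`false ↦ -1`) is an arbitrage point at level `n` of the `N`-period fractional binary market if
`|Y_n^{(N,H)}(x) + a_n^{(N)}| ≥ g_n^{(N,H)}`. -/
def isArb (σ H : ℝ) (a : ℝ → ℝ) (N n : ℕ) (x : ℕ → Bool) : Prop :=
  gNH σ H N n ≤
    |(∑ i ∈ Finset.range (n - 1), JN σ H N n (i + 1) * (if x i then (1 : ℝ) else -1)) +
      a ((n : ℝ) / N) / N|

/-- The cardinality `|𝒜_n^{(N,H)}|` of the set of arbitrage points at level `n`. -/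
def arbCard (σ H : ℝ) (a : ℝ → ℝ) (N n : ℕ) : ℕ :=
  {x : Fin (n - 1) → Bool |
    isArb σ H a N n (fun i => if h : i < n - 1 then x ⟨i, h⟩ else false)}.ncard

/-- The cardinality `|𝒜_𝒫^{(N,H)}|` of the set of arbitrage paths. -/
def arbPathCard (σ H : ℝ) (a : ℝ → ℝ) (N : ℕ) : ℕ :=
  {x : Fin (N - 1) → Bool | ∃ n, 1 ≤ n ∧ n ≤ N ∧
    isArb σ H a N n (fun i => if h : i < N - 1 then x ⟨i, h⟩ else false)}.ncard


section Aux
open intervalIntegral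

/-- Integral representation of `rho`. -/
lemma rho_rep {h : ℝ} (hh : 1 / 2 < h) {k : ℕ} (hk : 1 ≤ k) :
    rho h k = h * ∫ x in ((k : ℝ) - 1)..(k : ℝ),
      ((x + 1) ^ (2 * h - 1) - x ^ (2 * h - 1)) := by
  have hp : (-1 : ℝ) < 2 * h - 1 := by linarith
  have hq : 2 * h - 1 + 1 = 2 * h := by ring
  have h2 : (2 * h) ≠ 0 := by positivity
  have I2 : IntervalIntegrable (fun x : ℝ => x ^ (2 * h - 1)) volume ((k : ℝ) - 1) k :=
    intervalIntegrable_rpow' hp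
  have I1 : IntervalIntegrable (fun x : ℝ => (x + 1) ^ (2 * h - 1)) volume ((k : ℝ) - 1) k := by
    simpa using (intervalIntegrable_rpow' (a := (k : ℝ)) (b := (k : ℝ) + 1) hp).comp_add_right 1
  rw [integral_sub I1 I2]
  have e1 : (∫ x in ((k : ℝ) - 1)..(k : ℝ), (x + 1) ^ (2 * h - 1))
      = ((k + 1 : ℝ) ^ (2 * h) - (k : ℝ) ^ (2 * h)) / (2 * h) := by
    have := integral_comp_add_right (a := (k : ℝ) - 1) (b := (k : ℝ))
      (fun x : ℝ => x ^ (2 * h - 1)) 1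
    rw [this]
    have hb : (k : ℝ) - 1 + 1 = (k : ℝ) := by ring
    rw [hb, integral_rpow (Or.inl hp), hq]
  have e2 : (∫ x in ((k : ℝ) - 1)..(k : ℝ), x ^ (2 * h - 1))
      = ((k : ℝ) ^ (2 * h) - ((k : ℝ) - 1) ^ (2 * h)) / (2 * h) := by
    rw [integral_rpow (Or.inl hp), hq]
  rw [e1, e2]
  unfold rho
  field_simp
  ring

/-- Monotonicity of `y^p - x^p` in the exponent. -/
lemma pow_diff_mono {x y p q : ℝ} (hx : 0 ≤ x) (hxy : x ≤ y) (hy : 1 ≤ y)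
    (hp : 0 < p) (hpq : p ≤ q) : y ^ p - x ^ p ≤ y ^ q - x ^ q := by
  rcases le_or_gt 1 x with h1 | h1
  · have hx0 : (0 : ℝ) < x := by linarith
    have hy0 : (0 : ℝ) < y := by linarith
    have hyp : x ^ p ≤ y ^ p := Real.rpow_le_rpow hx hxy hp.le
    have e1 : y ^ q - y ^ p = y ^ p * (y ^ (q - p) - 1) := by
      rw [mul_sub, mul_one, ← Real.rpow_add hy0]; ring_nf
    have e2 : x ^ q - x ^ p = x ^ p * (x ^ (q - p) - 1) := by
      rw [mul_sub, mul_one, ← Real.rpow_add hx0]; ring_nf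
    have hd : x ^ (q - p) ≤ y ^ (q - p) := Real.rpow_le_rpow hx hxy (by linarith)
    have hone : (1 : ℝ) ≤ x ^ (q - p) := Real.one_le_rpow h1 (by linarith)
    have h3 : x ^ p * (x ^ (q - p) - 1) ≤ y ^ p * (y ^ (q - p) - 1) := by
      apply mul_le_mul hyp (by linarith) (by linarith) (Real.rpow_nonneg hy0.le p)
    linarith
  · have h2 : x ^ q ≤ x ^ p := by
      rcases eq_or_lt_of_le hx with hx0 | hx0
      · rw [← hx0, Real.zero_rpow hp.ne', Real.zero_rpow (by linarith : q ≠ 0)]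
      · exact Real.rpow_le_rpow_of_exponent_ge hx0 h1.le hpq
    have h3 : y ^ p ≤ y ^ q := Real.rpow_le_rpow_of_exponent_le hy hpq
    linarith

lemma integ_nonneg {h : ℝ} (hh : 1 / 2 < h) {k : ℕ} (hk : 1 ≤ k) :
    0 ≤ ∫ x in ((k : ℝ) - 1)..(k : ℝ), ((x + 1) ^ (2 * h - 1) - x ^ (2 * h - 1)) := by
  have hk1 : (1 : ℝ) ≤ (k : ℝ) := by exact_mod_cast hk
  apply intervalIntegral.integral_nonneg (by linarith)
  intro u hu
  have hu0 : 0 ≤ u := by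
    have := hu.1; linarith
  have : u ^ (2 * h - 1) ≤ (u + 1) ^ (2 * h - 1) :=
    Real.rpow_le_rpow hu0 (by linarith) (by linarith)
  linarith

lemma rho_nonneg {h : ℝ} (hh : 1 / 2 < h) {k : ℕ} (hk : 1 ≤ k) : 0 ≤ rho h k := by
  rw [rho_rep hh hk]
  exact mul_nonneg (by linarith) (integ_nonneg hh hk)

lemma rho_mono {h₁ h₂ : ℝ} (h1 : 1 / 2 < h₁) (h12 : h₁ ≤ h₂) {k : ℕ} (hk : 1 ≤ k) :
    rho h₁ k ≤ rho h₂ k := by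
  have h1' : 1 / 2 < h₂ := lt_of_lt_of_le h1 h12
  rw [rho_rep h1 hk, rho_rep h1' hk]
  have hk1 : (1 : ℝ) ≤ (k : ℝ) := by exact_mod_cast hk
  have hp1 : (-1 : ℝ) < 2 * h₁ - 1 := by linarith
  have hp2 : (-1 : ℝ) < 2 * h₂ - 1 := by linarith
  have I1 : IntervalIntegrable
      (fun x : ℝ => (x + 1) ^ (2 * h₁ - 1) - x ^ (2 * h₁ - 1)) volume ((k : ℝ) - 1) k := by
    apply IntervalIntegrable.sub _ (intervalIntegrable_rpow' hp1)
    simpa using (intervalIntegrable_rpow' (a := (k : ℝ)) (b := (k : ℝ) + 1) hp1).comp_add_right 1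
  have I2 : IntervalIntegrable
      (fun x : ℝ => (x + 1) ^ (2 * h₂ - 1) - x ^ (2 * h₂ - 1)) volume ((k : ℝ) - 1) k := by
    apply IntervalIntegrable.sub _ (intervalIntegrable_rpow' hp2)
    simpa using (intervalIntegrable_rpow' (a := (k : ℝ)) (b := (k : ℝ) + 1) hp2).comp_add_right 1
  have hD : (∫ x in ((k : ℝ) - 1)..(k : ℝ), ((x + 1) ^ (2 * h₁ - 1) - x ^ (2 * h₁ - 1)))
      ≤ ∫ x in ((k : ℝ) - 1)..(k : ℝ), ((x + 1) ^ (2 * h₂ - 1) - x ^ (2 * h₂ - 1)) := by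
    apply intervalIntegral.integral_mono_on (by linarith) I1 I2
    intro x hx
    have hx0 : 0 ≤ x := by have := hx.1; linarith
    exact pow_diff_mono hx0 (by linarith) (by linarith) (by linarith) (by linarith)
  exact mul_le_mul h12 hD (integ_nonneg h1 hk) (by linarith)

lemma rho_ub {h : ℝ} (h1 : 1 / 2 < h) (h2 : h < 3 / 4) {k : ℕ} (hk : 2 ≤ k) :
    rho h k ≤ h * (2 * h - 1) * ((k : ℝ) - 1) ^ (2 * h - 2) := by
  have hk1 : 1 ≤ k := le_trans one_le_two hk
  have hK : (2 : ℝ) ≤ (k : ℝ) := by exact_mod_cast hk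
  rw [rho_rep h1 hk1]
  have hp : (-1 : ℝ) < 2 * h - 1 := by linarith
  have I1 : IntervalIntegrable
      (fun x : ℝ => (x + 1) ^ (2 * h - 1) - x ^ (2 * h - 1)) volume ((k : ℝ) - 1) k := by
    apply IntervalIntegrable.sub _ (intervalIntegrable_rpow' hp)
    simpa using (intervalIntegrable_rpow' (a := (k : ℝ)) (b := (k : ℝ) + 1) hp).comp_add_right 1
  have key : ∀ x ∈ Set.Icc ((k : ℝ) - 1) (k : ℝ),
      (x + 1) ^ (2 * h - 1) - x ^ (2 * h - 1) ≤ (2 * h - 1) * ((k : ℝ) - 1) ^ (2 * h - 2) := by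
    intro x hx
    have hx1 : (1 : ℝ) ≤ x := by have := hx.1; linarith
    have hx0 : (0 : ℝ) < x := by linarith
    have hxinv : (0 : ℝ) ≤ x⁻¹ := by positivity
    have hstepA : (x + 1) ^ (2 * h - 1) ≤ x ^ (2 * h - 1) + (2 * h - 1) * x ^ (2 * h - 2) := by
      have hxe : x + 1 = x * (1 + x⁻¹) := by field_simp
      rw [hxe, Real.mul_rpow hx0.le (by positivity)]
      have hb : (1 + x⁻¹) ^ (2 * h - 1) ≤ 1 + (2 * h - 1) * x⁻¹ :=
        rpow_one_add_le_one_add_mul_self (by linarith) (by linarith) (by linarith)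
      have hmul : x ^ (2 * h - 1) * (1 + x⁻¹) ^ (2 * h - 1)
          ≤ x ^ (2 * h - 1) * (1 + (2 * h - 1) * x⁻¹) :=
        mul_le_mul_of_nonneg_left hb (Real.rpow_nonneg hx0.le _)
      have hpow : x ^ (2 * h - 1) * x⁻¹ = x ^ (2 * h - 2) := by
        rw [← Real.rpow_neg_one x, ← Real.rpow_add hx0]
        congr 1
        ring
      calc x ^ (2 * h - 1) * (1 + x⁻¹) ^ (2 * h - 1)
          ≤ x ^ (2 * h - 1) * (1 + (2 * h - 1) * x⁻¹) := hmul
        _ = x ^ (2 * h - 1) + (2 * h - 1) * (x ^ (2 * h - 1) * x⁻¹) := by ring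
        _ = x ^ (2 * h - 1) + (2 * h - 1) * x ^ (2 * h - 2) := by rw [hpow]
    have hstepB : x ^ (2 * h - 2) ≤ ((k : ℝ) - 1) ^ (2 * h - 2) :=
      Real.rpow_le_rpow_of_nonpos (by linarith) hx.1 (by linarith)
    have := mul_le_mul_of_nonneg_left hstepB (by linarith : (0 : ℝ) ≤ 2 * h - 1)
    linarith
  have hmono := intervalIntegral.integral_mono_on (by linarith : (k : ℝ) - 1 ≤ k) I1
    intervalIntegrable_const key
  rw [intervalIntegral.integral_const] at hmono
  have hsm : ((k : ℝ) - ((k : ℝ) - 1)) • ((2 * h - 1) * ((k : ℝ) - 1) ^ (2 * h - 2))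
      = (2 * h - 1) * ((k : ℝ) - 1) ^ (2 * h - 2) := by
    rw [smul_eq_mul]; ring
  rw [hsm] at hmono
  calc h * ∫ x in ((k : ℝ) - 1)..(k : ℝ), ((x + 1) ^ (2 * h - 1) - x ^ (2 * h - 1))
      ≤ h * ((2 * h - 1) * ((k : ℝ) - 1) ^ (2 * h - 2)) :=
        mul_le_mul_of_nonneg_left hmono (by linarith)
    _ = h * (2 * h - 1) * ((k : ℝ) - 1) ^ (2 * h - 2) := by ring

lemma rho_one_eq (h : ℝ) (hh : 0 < h) : rho h 1 = ((2 : ℝ) ^ (2 * h) - 2) / 2 := by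
  unfold rho
  push_cast
  rw [show (1 : ℝ) + 1 = 2 by norm_num, show (1 : ℝ) - 1 = 0 by norm_num,
    Real.zero_rpow (by positivity : (2 : ℝ) * h ≠ 0), Real.one_rpow]
  ring

end Aux

section Aux2

lemma rho_sq_ub {h : ℝ} (h1 : 1 / 2 < h) (h2 : h < 3 / 4) {k : ℕ} (hk : 2 ≤ k) :
    rho h k ^ 2 ≤ (h * (2 * h - 1)) ^ 2 * ((k : ℝ) - 1) ^ (4 * h - 4) := by
  have hK : (2 : ℝ) ≤ (k : ℝ) := by exact_mod_cast hk
  have hb := rho_ub h1 h2 hk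
  have hnn := rho_nonneg h1 (le_trans one_le_two hk)
  have hpow := pow_le_pow_left₀ hnn hb 2
  refine le_trans hpow (le_of_eq ?_)
  have hsq : (((k : ℝ) - 1) ^ (2 * h - 2)) ^ 2 = ((k : ℝ) - 1) ^ (4 * h - 4) := by
    rw [← Real.rpow_natCast (((k : ℝ) - 1) ^ (2 * h - 2)) 2,
      ← Real.rpow_mul (by linarith : (0 : ℝ) ≤ (k : ℝ) - 1)]
    congr 1
    push_cast
    ring
  rw [mul_pow, hsq]

lemma summable_shift {p : ℝ} (hp : p < -1) : Summable (fun n : ℕ => ((n : ℝ) + 1) ^ p) := by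
  have h1 : Summable (fun n : ℕ => ((n : ℕ) : ℝ) ^ p) := Real.summable_nat_rpow.mpr hp
  have h2 := (summable_nat_add_iff 1).mpr h1
  simpa using h2

lemma summable_rho_sq {h : ℝ} (h1 : 1 / 2 < h) (h2 : h < 3 / 4) :
    Summable (fun k : ℕ => (rho h (k + 1)) ^ 2) := by
  rw [← summable_nat_add_iff 1]
  have hsum : Summable (fun n : ℕ => ((n : ℝ) + 1) ^ (4 * h - 4)) :=
    summable_shift (by linarith)
  apply Summable.of_nonneg_of_le (fun n => sq_nonneg _) _ (hsum.mul_left ((h * (2 * h - 1)) ^ 2))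
  intro n
  have hub := rho_sq_ub h1 h2 (k := n + 1 + 1) (by omega)
  have hKm : ((n + 1 + 1 : ℕ) : ℝ) - 1 = (n : ℝ) + 1 := by push_cast; ring
  rw [hKm] at hub
  exact hub

lemma sqrt_key {n : ℕ} (hn : 1 ≤ n) :
    ((n : ℝ) + 1) ^ (-(3 : ℝ) / 2) ≤ 2 / Real.sqrt n - 2 / Real.sqrt ((n : ℝ) + 1) := by
  set s := Real.sqrt n with hs_def
  set t := Real.sqrt ((n : ℝ) + 1) with ht_def
  have hn1 : (1 : ℝ) ≤ (n : ℝ) := by exact_mod_cast hn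
  have hs : 0 < s := Real.sqrt_pos.mpr (by linarith)
  have ht : 0 < t := Real.sqrt_pos.mpr (by linarith)
  have hs2 : s ^ 2 = (n : ℝ) := Real.sq_sqrt (by linarith)
  have ht2 : t ^ 2 = (n : ℝ) + 1 := Real.sq_sqrt (by linarith)
  have hst : s ≤ t := Real.sqrt_le_sqrt (by linarith)
  have hrp : ((n : ℝ) + 1) ^ (-(3 : ℝ) / 2) = (((n : ℝ) + 1) * t)⁻¹ := by
    rw [show (-(3 : ℝ) / 2) = -(1 + 1 / 2) by norm_num, Real.rpow_neg (by linarith),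
      Real.rpow_add (by linarith), Real.rpow_one, ← Real.sqrt_eq_rpow]
  rw [hrp]
  have e : 2 / s - 2 / t = 2 * (t - s) / (s * t) := by
    field_simp
  rw [e, inv_eq_one_div, div_le_div_iff₀ (by positivity) (by positivity)]
  have key2 : (t - s) * (t + s) = 1 := by nlinarith [hs2, ht2]
  have e2 : (t - s) * ((t + s) * (s * t)) = 1 * (s * t) := by
    rw [← mul_assoc, key2]
  rw [← e2]
  have hcore : (t + s) * (s * t) ≤ 2 * (t ^ 2 * t) := by nlinarith [hs, ht, hst]
  calc (t - s) * ((t + s) * (s * t)) ≤ (t - s) * (2 * (t ^ 2 * t)) := by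
        apply mul_le_mul_of_nonneg_left hcore (by linarith)
    _ = 2 * (t - s) * (((n : ℝ) + 1) * t) := by rw [ht2]; ring

lemma tsum_neg32_le : (∑' k : ℕ, ((k : ℝ) + 1) ^ (-(3 : ℝ) / 2)) ≤ 3 := by
  have H : ∀ n : ℕ, 1 ≤ n →
      (∑ i ∈ Finset.range n, ((i : ℝ) + 1) ^ (-(3 : ℝ) / 2)) ≤ 3 - 2 / Real.sqrt n := by
    intro n hn
    induction n, hn using Nat.le_induction with
    | base =>
      rw [Finset.sum_range_one]
      norm_num [Real.one_rpow, Real.sqrt_one]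
    | succ n hn ih =>
      rw [Finset.sum_range_succ]
      have key := sqrt_key hn
      have hcast : ((n + 1 : ℕ) : ℝ) = (n : ℝ) + 1 := by push_cast; ring
      rw [hcast]
      linarith
  apply Real.tsum_le_of_sum_range_le (fun n => Real.rpow_nonneg (by positivity) _)
  intro n
  rcases Nat.eq_zero_or_pos n with rfl | hn
  · simp
  · have h1 := H n hn
    have h2 : 0 ≤ 2 / Real.sqrt n := by positivity
    linarith

lemma S_lt_S {h₁ h₂ : ℝ} (ha : 1 / 2 < h₁) (hab : h₁ < h₂) (hb : h₂ < 3 / 4) :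
    (∑' k : ℕ, (rho h₁ (k + 1)) ^ 2) < ∑' k : ℕ, (rho h₂ (k + 1)) ^ 2 := by
  have s1 := summable_rho_sq ha (lt_trans hab hb)
  have s2 := summable_rho_sq (lt_trans ha hab) hb
  refine Summable.tsum_lt_tsum (i := 0) (fun k => ?_) ?_ s1 s2
  · have h1k : 1 ≤ k + 1 := Nat.succ_le_succ (Nat.zero_le k)
    exact pow_le_pow_left₀ (rho_nonneg ha h1k) (rho_mono ha hab.le h1k) 2
  · show rho h₁ (0 + 1) ^ 2 < rho h₂ (0 + 1) ^ 2
    norm_num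
    rw [rho_one_eq h₁ (by linarith), rho_one_eq h₂ (by linarith)]
    have h2lt : (2 : ℝ) ^ (2 * h₁) < 2 ^ (2 * h₂) :=
      Real.rpow_lt_rpow_of_exponent_lt one_lt_two (by linarith)
    have h2ge : (2 : ℝ) ≤ 2 ^ (2 * h₁) := by
      nth_rewrite 1 [← Real.rpow_one 2]
      exact Real.rpow_le_rpow_of_exponent_le one_le_two (by linarith)
    apply pow_lt_pow_left₀ (by linarith) (by linarith) two_ne_zero
end Aux2

section Aux3

set_option maxHeartbeats 1000000 in
lemma S_low : (∑' k : ℕ, (rho (51 / 100) (k + 1)) ^ 2) < 1 / 4 := by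
  have ha : (1 / 2 : ℝ) < 51 / 100 := by norm_num
  have hb : (51 / 100 : ℝ) < 3 / 4 := by norm_num
  have hsum := summable_rho_sq ha hb
  rw [Summable.tsum_eq_zero_add hsum]
  -- first term
  have hB : ((1 : ℝ) + 1) ^ ((1 : ℝ) / 50) ≤ 1 + (1 / 50 : ℝ) * 1 :=
    rpow_one_add_le_one_add_mul_self (by norm_num) (by norm_num) (by norm_num)
  have h2e : (2 : ℝ) ^ (2 * (51 / 100 : ℝ)) = 2 * (2 : ℝ) ^ ((1 : ℝ) / 50) := by
    rw [show (2 : ℝ) * (51 / 100) = 1 + 1 / 50 by norm_num,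
      Real.rpow_add (by norm_num : (0 : ℝ) < 2), Real.rpow_one]
  have ht0 : rho (51 / 100) (0 + 1) ≤ 1 / 50 := by
    rw [show (0 + 1 : ℕ) = 1 by norm_num, rho_one_eq _ (by norm_num), h2e]
    norm_num at hB ⊢
    linarith
  have ht0' : rho (51 / 100) (0 + 1) ^ 2 ≤ (1 / 50 : ℝ) ^ 2 :=
    pow_le_pow_left₀ (rho_nonneg ha (by norm_num)) ht0 2
  -- tail
  have t1 : Summable (fun k : ℕ => (rho (51 / 100) (k + 1 + 1)) ^ 2) :=
    (summable_nat_add_iff 1).mpr hsum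
  have t2 : Summable (fun k : ℕ => ((k : ℝ) + 1) ^ (-(3 : ℝ) / 2)) :=
    summable_shift (by norm_num)
  have hpw : ∀ k : ℕ, (rho (51 / 100) (k + 1 + 1)) ^ 2
      ≤ (51 / 5000 : ℝ) ^ 2 * ((k : ℝ) + 1) ^ (-(3 : ℝ) / 2) := by
    intro k
    have hub := rho_sq_ub ha hb (k := k + 1 + 1) (by omega)
    have hKm : ((k + 1 + 1 : ℕ) : ℝ) - 1 = (k : ℝ) + 1 := by push_cast; ring
    have C2 : ((51 / 100 : ℝ) * (2 * (51 / 100) - 1)) ^ 2 = (51 / 5000 : ℝ) ^ 2 := by norm_num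
    rw [hKm, C2] at hub
    refine le_trans hub ?_
    apply mul_le_mul_of_nonneg_left _ (by positivity)
    have hk1 : (1 : ℝ) ≤ (k : ℝ) + 1 := by linarith [Nat.cast_nonneg (α := ℝ) k]
    apply Real.rpow_le_rpow_of_exponent_le hk1
    norm_num
  have htail : (∑' k : ℕ, (rho (51 / 100) (k + 1 + 1)) ^ 2)
      ≤ (51 / 5000 : ℝ) ^ 2 * 3 := by
    calc (∑' k : ℕ, (rho (51 / 100) (k + 1 + 1)) ^ 2)
        ≤ ∑' k : ℕ, (51 / 5000 : ℝ) ^ 2 * ((k : ℝ) + 1) ^ (-(3 : ℝ) / 2) :=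
          Summable.tsum_le_tsum hpw t1 (t2.mul_left _)
      _ = (51 / 5000 : ℝ) ^ 2 * ∑' k : ℕ, ((k : ℝ) + 1) ^ (-(3 : ℝ) / 2) := tsum_mul_left
      _ ≤ (51 / 5000 : ℝ) ^ 2 * 3 := by
          apply mul_le_mul_of_nonneg_left tsum_neg32_le (by positivity)
  have hnum : (1 / 50 : ℝ) ^ 2 + (51 / 5000 : ℝ) ^ 2 * 3 < 1 / 4 := by norm_num
  linarith

lemma rpow_nat_lb {b c : ℝ} (hb : 0 ≤ b) (hc : 0 ≤ c) {m n : ℕ} (hn : n ≠ 0)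
    (hcb : c ^ n ≤ b ^ m) : c ≤ b ^ ((m : ℝ) / (n : ℝ)) := by
  calc c = (c ^ n) ^ ((n : ℝ)⁻¹) := (Real.pow_rpow_inv_natCast hc hn).symm
    _ ≤ (b ^ m) ^ ((n : ℝ)⁻¹) := Real.rpow_le_rpow (pow_nonneg hc n) hcb (by positivity)
    _ = b ^ ((m : ℝ) / (n : ℝ)) := by
        rw [← Real.rpow_natCast b m, ← Real.rpow_mul hb, div_eq_mul_inv]

lemma rpow_nat_ub {b c : ℝ} (hb : 0 ≤ b) (hc : 0 ≤ c) {m n : ℕ} (hn : n ≠ 0)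
    (hcb : b ^ m ≤ c ^ n) : b ^ ((m : ℝ) / (n : ℝ)) ≤ c := by
  calc b ^ ((m : ℝ) / (n : ℝ)) = (b ^ m) ^ ((n : ℝ)⁻¹) := by
        rw [← Real.rpow_natCast b m, ← Real.rpow_mul hb, div_eq_mul_inv]
    _ ≤ (c ^ n) ^ ((n : ℝ)⁻¹) := Real.rpow_le_rpow (pow_nonneg hb m) hcb (by positivity)
    _ = c := Real.pow_rpow_inv_natCast hc hn

lemma S_high : (1 / 4 : ℝ) < ∑' k : ℕ, (rho (37 / 50) (k + 1)) ^ 2 := by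
  have ha : (1 / 2 : ℝ) < 37 / 50 := by norm_num
  have hb : (37 / 50 : ℝ) < 3 / 4 := by norm_num
  have hsum := summable_rho_sq ha hb
  have hq : (2 : ℝ) * (37 / 50) = 37 / 25 := by norm_num
  -- rpow bounds
  have lb2 : (27894 / 10000 : ℝ) ≤ (2 : ℝ) ^ ((37 : ℝ) / 25) := by
    have := rpow_nat_lb (b := 2) (c := 27894 / 10000) (m := 37) (n := 25)
      (by norm_num) (by norm_num) (by norm_num) (by norm_num)
    simpa using this
  have ub2 : (2 : ℝ) ^ ((37 : ℝ) / 25) ≤ 27895 / 10000 := by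
    have := rpow_nat_ub (b := 2) (c := 27895 / 10000) (m := 37) (n := 25)
      (by norm_num) (by norm_num) (by norm_num) (by norm_num)
    simpa using this
  have lb3 : (50832 / 10000 : ℝ) ≤ (3 : ℝ) ^ ((37 : ℝ) / 25) := by
    have := rpow_nat_lb (b := 3) (c := 50832 / 10000) (m := 37) (n := 25)
      (by norm_num) (by norm_num) (by norm_num) (by norm_num)
    simpa using this
  have ub3 : (3 : ℝ) ^ ((37 : ℝ) / 25) ≤ 50833 / 10000 := by
    have := rpow_nat_ub (b := 3) (c := 50833 / 10000) (m := 37) (n := 25)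
      (by norm_num) (by norm_num) (by norm_num) (by norm_num)
    simpa using this
  have lb4 : (77812 / 10000 : ℝ) ≤ (4 : ℝ) ^ ((37 : ℝ) / 25) := by
    have := rpow_nat_lb (b := 4) (c := 77812 / 10000) (m := 37) (n := 25)
      (by norm_num) (by norm_num) (by norm_num) (by norm_num)
    simpa using this
  have ub4 : (4 : ℝ) ^ ((37 : ℝ) / 25) ≤ 77813 / 10000 := by
    have := rpow_nat_ub (b := 4) (c := 77813 / 10000) (m := 37) (n := 25)
      (by norm_num) (by norm_num) (by norm_num) (by norm_num)
    simpa using this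
  have lb5 : (108261 / 10000 : ℝ) ≤ (5 : ℝ) ^ ((37 : ℝ) / 25) := by
    have := rpow_nat_lb (b := 5) (c := 108261 / 10000) (m := 37) (n := 25)
      (by norm_num) (by norm_num) (by norm_num) (by norm_num)
    simpa using this
  -- rho values
  have e1 : rho (37 / 50) 1 = ((2 : ℝ) ^ ((37 : ℝ) / 25) - 2) / 2 := by
    rw [rho_one_eq _ (by norm_num), hq]
  have e2 : rho (37 / 50) 2
      = ((3 : ℝ) ^ ((37 : ℝ) / 25) + 1 - 2 * (2 : ℝ) ^ ((37 : ℝ) / 25)) / 2 := by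
    unfold rho
    push_cast
    rw [hq, show (2 : ℝ) + 1 = 3 by norm_num, show (2 : ℝ) - 1 = 1 by norm_num, Real.one_rpow]
  have e3 : rho (37 / 50) 3
      = ((4 : ℝ) ^ ((37 : ℝ) / 25) + (2 : ℝ) ^ ((37 : ℝ) / 25)
          - 2 * (3 : ℝ) ^ ((37 : ℝ) / 25)) / 2 := by
    unfold rho
    push_cast
    rw [hq, show (3 : ℝ) + 1 = 4 by norm_num, show (3 : ℝ) - 1 = 2 by norm_num]
  have e4 : rho (37 / 50) 4
      = ((5 : ℝ) ^ ((37 : ℝ) / 25) + (3 : ℝ) ^ ((37 : ℝ) / 25)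
          - 2 * (4 : ℝ) ^ ((37 : ℝ) / 25)) / 2 := by
    unfold rho
    push_cast
    rw [hq, show (4 : ℝ) + 1 = 5 by norm_num, show (4 : ℝ) - 1 = 3 by norm_num]
  have r1 : (3947 / 10000 : ℝ) ≤ rho (37 / 50) 1 := by
    rw [e1]; linarith
  have r2 : (2521 / 10000 : ℝ) ≤ rho (37 / 50) 2 := by
    rw [e2]; linarith
  have r3 : (2020 / 10000 : ℝ) ≤ rho (37 / 50) 3 := by
    rw [e3]; linarith
  have r4 : (17335 / 100000 : ℝ) ≤ rho (37 / 50) 4 := by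
    rw [e4]; linarith
  have hfin : (∑ i ∈ Finset.range 4, (rho (37 / 50) (i + 1)) ^ 2)
      ≤ ∑' k : ℕ, (rho (37 / 50) (k + 1)) ^ 2 :=
    Summable.sum_le_tsum _ (fun i _ => sq_nonneg _) hsum
  refine lt_of_lt_of_le ?_ hfin
  rw [Finset.sum_range_succ, Finset.sum_range_succ, Finset.sum_range_succ,
    Finset.sum_range_one]
  norm_num
  have s1 : (3947 / 10000 : ℝ) ^ 2 ≤ rho (37 / 50) 1 ^ 2 :=
    pow_le_pow_left₀ (by norm_num) r1 2
  have s2 : (2521 / 10000 : ℝ) ^ 2 ≤ rho (37 / 50) 2 ^ 2 :=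
    pow_le_pow_left₀ (by norm_num) r2 2
  have s3 : (2020 / 10000 : ℝ) ^ 2 ≤ rho (37 / 50) 3 ^ 2 :=
    pow_le_pow_left₀ (by norm_num) r3 2
  have s4 : (17335 / 100000 : ℝ) ^ 2 ≤ rho (37 / 50) 4 ^ 2 :=
    pow_le_pow_left₀ (by norm_num) r4 2
  have hnum : (1 / 4 : ℝ) < (3947 / 10000 : ℝ) ^ 2 + (2521 / 10000 : ℝ) ^ 2
      + (2020 / 10000 : ℝ) ^ 2 + (17335 / 100000 : ℝ) ^ 2 := by norm_num
  linarith

end Aux3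


/-- Corollary A.5: there exists `h_c ∈ (1/2, 3/4)` such that `∑_{k≥1} ρ_h(k)² < 1/4` for
`h ∈ (1/2, h_c)` and `∑_{k≥1} ρ_h(k)² > 1/4` for `h ∈ (h_c, 3/4)`. -/
theorem statement19 :
    ∃ hc ∈ Set.Ioo (1 / 2 : ℝ) (3 / 4),
      (∀ h ∈ Set.Ioo (1 / 2 : ℝ) hc, (∑' k : ℕ, (rho h (k + 1)) ^ 2) < 1 / 4) ∧
      (∀ h ∈ Set.Ioo hc (3 / 4 : ℝ), (1 / 4 : ℝ) < ∑' k : ℕ, (rho h (k + 1)) ^ 2) := by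
  set A : Set ℝ :=
    {x : ℝ | x ∈ Set.Ioo (1 / 2 : ℝ) (3 / 4) ∧ (∑' k : ℕ, (rho x (k + 1)) ^ 2) < 1 / 4}
    with hA
  have h0A : (51 / 100 : ℝ) ∈ A := ⟨⟨by norm_num, by norm_num⟩, S_low⟩
  have hne : A.Nonempty := ⟨_, h0A⟩
  have hbdd : BddAbove A := ⟨3 / 4, fun x hx => (hx.1.2).le⟩
  have hclb : (51 / 100 : ℝ) ≤ sSup A := le_csSup hbdd h0A
  have hcub : sSup A ≤ 37 / 50 := by
    apply csSup_le hne
    intro x hx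
    by_contra hgt
    push_neg at hgt
    have hlt : (∑' k : ℕ, (rho (37 / 50) (k + 1)) ^ 2) < ∑' k : ℕ, (rho x (k + 1)) ^ 2 :=
      S_lt_S (by norm_num) hgt hx.1.2
    linarith [hx.2, S_high]
  refine ⟨sSup A, ⟨by linarith, by linarith⟩, ?_, ?_⟩
  · intro h hh
    obtain ⟨h', h'A, hlt⟩ := exists_lt_of_lt_csSup hne hh.2
    have : (∑' k : ℕ, (rho h (k + 1)) ^ 2) < ∑' k : ℕ, (rho h' (k + 1)) ^ 2 :=
      S_lt_S hh.1 hlt h'A.1.2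
    linarith [h'A.2]
  · intro h hh
    by_contra hle
    push_neg at hle
    set m : ℝ := (sSup A + h) / 2 with hm
    have hm1 : sSup A < m := by
      rw [hm]; linarith [hh.1]
    have hm2 : m < h := by
      rw [hm]; linarith [hh.1]
    have hmA : m ∈ A := by
      refine ⟨⟨by linarith, by linarith [hh.2]⟩, ?_⟩
      have : (∑' k : ℕ, (rho m (k + 1)) ^ 2) < ∑' k : ℕ, (rho h (k + 1)) ^ 2 :=
        S_lt_S (by linarith) hm2 hh.2
      linarith
    have := le_csSup hbdd hmA
    linarith

end
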